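/- arXiv:1004.4073 — 3 statements merged into one kernel-verified Lean document; each statement's English description precedes it below -/
import Mathlib

section
/- Let ρ : ℝ³ → ℝ be continuous, compactly supported, nonnegative, and not identically zero, with support contained in the half space {x¹ > 0}. Let U(x) = −G ∫ ρ(x')/|x−x'| dx' be its Newtonian potential. Then on every plane Σ_c = {x¹ = c} with c ≤ 0, the derivative in the direction of the left normal is strictly positive: −∂₁U(x) > 0 for all x ∈ Σ_c. (Equivalently, the gravitational force due to a body on the other side of a separating plane is attractive.) -/
open Real MeasureTheory

noncomputable section

abbrev E3 := EuclideanSpace ℝ (Fin 3)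

def pd (i : Fin 3) (f : E3 → ℝ) (x : E3) : ℝ :=
  fderiv ℝ f x (EuclideanSpace.single i 1)

/-- The decaying Newtonian potential `U(x) = −G ∫ ρ(x') / |x − x'| dx'`. -/
def newtPot (G : ℝ) (ρ : E3 → ℝ) (x : E3) : ℝ :=
  -G * ∫ y, ρ y / ‖x - y‖

lemma hasFDerivAt_invnorm (y x : E3) (h : x ≠ y) :
    HasFDerivAt (fun x : E3 => ‖x - y‖⁻¹)
      ((-(‖x - y‖ ^ 3)⁻¹) • innerSL ℝ (x - y)) x := by
  have hz : x - y ≠ 0 := sub_ne_zero.mpr h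
  have hn : (0:ℝ) < ‖x - y‖ := norm_pos_iff.mpr hz
  have h1 : HasFDerivAt (fun z : E3 => ‖z - y‖ ^ 2)
      (2 • innerSL ℝ (x - y)) x := by
    have := (hasStrictFDerivAt_norm_sq (x - y)).hasFDerivAt.comp x
      ((hasFDerivAt_id x).sub_const y)
    simpa [Function.comp_def] using this
  have h2 : HasDerivAt (fun s : ℝ => s ^ (-(1/2) : ℝ))
      ((-(1/2)) * (‖x - y‖ ^ 2) ^ ((-(1/2)) - 1 : ℝ)) (‖x - y‖ ^ 2) := by
    exact Real.hasDerivAt_rpow_const (Or.inl (by positivity))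
  have h3 := h2.comp_hasFDerivAt x h1
  have key : (fun x : E3 => ‖x - y‖⁻¹)
      =ᶠ[nhds x] (fun z : E3 => (‖z - y‖ ^ 2) ^ (-(1/2) : ℝ)) := by
    have hopen : IsOpen {z : E3 | z ≠ y} := isOpen_ne
    filter_upwards [hopen.mem_nhds h] with z hz'
    have hznz : (0:ℝ) < ‖z - y‖ := norm_pos_iff.mpr (sub_ne_zero.mpr hz')
    rw [← Real.rpow_natCast ‖z - y‖ 2, ← Real.rpow_mul hznz.le]
    norm_num
    rw [Real.rpow_neg_one]
  have h4 := h3.congr_of_eventuallyEq key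
  have key2 : ((‖x - y‖ ^ 2 : ℝ)) ^ ((-(1/2)) - 1 : ℝ) = (‖x - y‖ ^ 3)⁻¹ := by
    rw [← Real.rpow_natCast ‖x - y‖ 2, ← Real.rpow_mul hn.le]
    norm_num
  have : ((-(1/2) : ℝ) * (‖x - y‖ ^ 2) ^ ((-(1/2)) - 1 : ℝ)) • (2 • innerSL ℝ (x - y))
      = (-(‖x - y‖ ^ 3)⁻¹) • innerSL ℝ (x - y) := by
    rw [← Nat.cast_smul_eq_nsmul ℝ 2, smul_smul, key2]
    congr 1
    ring
  rw [this] at h4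
  exact h4

lemma abs_apply_le_norm (z : E3) (i : Fin 3) : |z i| ≤ ‖z‖ := by
  rw [EuclideanSpace.norm_eq]
  calc |z i| = Real.sqrt (‖z i‖ ^ 2) := by
        rw [Real.sqrt_sq_eq_abs, Real.norm_eq_abs, abs_abs]
    _ ≤ Real.sqrt (∑ j, ‖z j‖ ^ 2) := Real.sqrt_le_sqrt
        (Finset.single_le_sum (f := fun j => ‖z j‖ ^ 2)
          (fun j _ => sq_nonneg _) (Finset.mem_univ i))

set_option maxHeartbeats 1000000 in
set_option synthInstance.maxHeartbeats 400000 in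
/-- if `ρ ≥ 0` is continuous, compactly supported, not identically zero,
and supported in `{x¹ > 0}`, then on every plane `{x¹ = c}` with `c ≤ 0` the derivative
of the Newtonian potential in the direction of the left normal `−e₁` is strictly
positive: `−∂₁U > 0` (the force exerted by the body is attractive). -/
theorem attraction_across_separating_plane (G : ℝ) (hG : 0 < G)
    (ρ : E3 → ℝ) (hρc : Continuous ρ) (hρs : HasCompactSupport ρ)
    (hρnn : ∀ x, 0 ≤ ρ x) (hρne : ρ ≠ 0)
    (hsupp : tsupport ρ ⊆ {x : E3 | 0 < x 0}) :
    ∀ c ≤ (0 : ℝ), ∀ x : E3, x 0 = c → 0 < -pd 0 (newtPot G ρ) x := by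
  intro c hc x hx
  -- basic facts about the support
  set K := tsupport ρ with hK
  have hKc : IsCompact K := hρs
  have hKne : K.Nonempty := by
    obtain ⟨y, hy⟩ := Function.ne_iff.mp hρne
    exact ⟨y, subset_tsupport ρ hy⟩
  have hcoord : Continuous fun y : E3 => y 0 := by
    exact (EuclideanSpace.proj (0 : Fin 3)).continuous
  obtain ⟨y₀, hy₀K, hy₀min⟩ := hKc.exists_isMinOn hKne hcoord.continuousOn
  set δ : ℝ := y₀ 0 with hδ
  have hδpos : 0 < δ := hsupp hy₀K
  have hδle : ∀ y ∈ K, δ ≤ y 0 := fun y hy => hy₀min hy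
  set ε : ℝ := δ / 2 with hε
  have hεpos : 0 < ε := by positivity
  have hx0 : x 0 ≤ 0 := hx ▸ hc
  -- separation estimates
  have hsep : ∀ z ∈ Metric.ball x ε, ∀ y ∈ K, ε ≤ ‖z - y‖ := by
    intro z hz y hy
    have h1 : |z 0 - x 0| ≤ ‖z - x‖ := by
      have := abs_apply_le_norm (z - x) 0
      simpa using this
    have h2 : ‖z - x‖ < ε := by
      rw [Metric.mem_ball, dist_eq_norm] at hz; exact hz
    have hz0 : z 0 < ε := by
      have := (abs_lt.mp (lt_of_le_of_lt h1 h2)).2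
      linarith
    have h3 : |z 0 - y 0| ≤ ‖z - y‖ := by
      have := abs_apply_le_norm (z - y) 0
      simpa using this
    have h4 : δ ≤ y 0 := hδle y hy
    have : ε ≤ y 0 - z 0 := by
      simp only [hε] at hz0 ⊢; linarith
    calc ε ≤ y 0 - z 0 := this
      _ ≤ |z 0 - y 0| := by rw [abs_sub_comm]; exact le_abs_self _
      _ ≤ ‖z - y‖ := h3
  have hne : ∀ z ∈ Metric.ball x ε, ∀ y ∈ K, z ≠ y := by
    intro z hz y hy h
    have := hsep z hz y hy
    rw [h, sub_self, norm_zero] at this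
    linarith
  have hnotK : ∀ z ∈ Metric.ball x ε, z ∉ K := fun z hz hzK =>
    (hne z hz z hzK) rfl
  -- the integrand and its derivative
  set F : E3 → E3 → ℝ := fun z y => ρ y / ‖z - y‖ with hF
  set F' : E3 → E3 → (E3 →L[ℝ] ℝ) := fun z y =>
    ρ y • ((-(‖z - y‖ ^ 3)⁻¹) • innerSL ℝ (z - y)) with hF'
  have hFcont : ∀ z, z ∉ K → Continuous (F z) := by
    intro z hz
    rw [continuous_iff_continuousAt]
    intro y
    by_cases hy : y ∈ K
    · have hd : ‖z - y‖ ≠ 0 := by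
        have : z ≠ y := fun h => hz (h ▸ hy)
        simpa [sub_eq_zero] using this
      exact (hρc.continuousAt).div
        ((continuous_const.sub continuous_id).norm.continuousAt) hd
    · have hzero : (fun w => F z w) =ᶠ[nhds y] fun _ => (0:ℝ) := by
        filter_upwards [(isOpen_compl_iff.mpr (isClosed_tsupport ρ)).mem_nhds hy] with w hw
        simp [hF, image_eq_zero_of_notMem_tsupport hw]
      exact ContinuousAt.congr (continuousAt_const (y := (0:ℝ))) hzero.symm
  have hxK : x ∉ K := hnotK x (Metric.mem_ball_self hεpos)
  have hF'cont : Continuous (F' x) := by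
    rw [continuous_iff_continuousAt]
    intro y
    by_cases hy : y ∈ K
    · have hd : x - y ≠ 0 := sub_ne_zero.mpr (fun h => hxK (h ▸ hy))
      have hd' : ‖x - y‖ ≠ 0 := norm_ne_zero_iff.mpr hd
      apply ContinuousAt.smul hρc.continuousAt
      apply ContinuousAt.smul (f := fun y : E3 => -(‖x - y‖ ^ 3)⁻¹) (g := fun y : E3 => innerSL ℝ (x - y))
      · exact ((((continuous_const.sub continuous_id).norm.pow 3).continuousAt).inv₀
          (pow_ne_zero 3 hd')).neg
      · exact ((innerSL ℝ).continuous.comp (continuous_const.sub continuous_id)).continuousAt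
    · have hzero : (fun w => F' x w) =ᶠ[nhds y] fun _ => (0 : E3 →L[ℝ] ℝ) := by
        filter_upwards [(isOpen_compl_iff.mpr (isClosed_tsupport ρ)).mem_nhds hy] with w hw
        simp [hF', image_eq_zero_of_notMem_tsupport hw]
      exact ContinuousAt.congr (continuousAt_const (y := (0 : E3 →L[ℝ] ℝ))) hzero.symm
  -- bound
  set bound : E3 → ℝ := fun y => ρ y * (ε ^ 2)⁻¹ with hbound
  have h_bound : ∀ y : E3, ∀ z ∈ Metric.ball x ε, ‖F' z y‖ ≤ bound y := by
    intro y z hz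
    by_cases hy : y ∈ K
    · have h1 : ε ≤ ‖z - y‖ := hsep z hz y hy
      have h2 : (0:ℝ) < ‖z - y‖ := lt_of_lt_of_le hεpos h1
      have hA : ‖((-(‖z - y‖ ^ 3)⁻¹ : ℝ)) • innerSL ℝ (z - y)‖ ≤ (‖z - y‖ ^ 3)⁻¹ * ‖z - y‖ := by
        refine (norm_smul_le ((-(‖z - y‖ ^ 3)⁻¹ : ℝ)) (innerSL ℝ (z - y))).trans ?_
        rw [innerSL_apply_norm, Real.norm_eq_abs, abs_neg,
          abs_of_nonneg (inv_nonneg.mpr (by positivity : (0:ℝ) ≤ ‖z - y‖ ^ 3))]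
      have h4 : ‖F' z y‖ ≤ ρ y * ((‖z - y‖ ^ 3)⁻¹ * ‖z - y‖) := by
        show ‖ρ y • (((-(‖z - y‖ ^ 3)⁻¹ : ℝ)) • innerSL ℝ (z - y))‖ ≤ _
        refine (norm_smul_le (ρ y) (((-(‖z - y‖ ^ 3)⁻¹ : ℝ)) • innerSL ℝ (z - y))).trans ?_
        rw [Real.norm_eq_abs, abs_of_nonneg (hρnn y)]
        exact mul_le_mul_of_nonneg_left hA (hρnn y)
      refine h4.trans ?_
      apply mul_le_mul_of_nonneg_left _ (hρnn y)
      have h3 : (‖z - y‖ ^ 3)⁻¹ * ‖z - y‖ = (‖z - y‖ ^ 2)⁻¹ := by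
        field_simp
      rw [h3]
      apply inv_anti₀ (by positivity)
      exact pow_le_pow_left₀ hεpos.le h1 2
    · simp [hF', image_eq_zero_of_notMem_tsupport hy, hbound]
  have hbound_int : Integrable bound := by
    apply Continuous.integrable_of_hasCompactSupport
      (hρc.mul continuous_const)
    apply HasCompactSupport.intro hKc
    intro y hy
    simp [image_eq_zero_of_notMem_tsupport hy]
  -- differentiability
  have h_diff : ∀ y : E3, ∀ z ∈ Metric.ball x ε,
      HasFDerivAt (fun w => F w y) (F' z y) z := by
    intro y z hz
    by_cases hy : y ∈ K
    · have hzy : z ≠ y := hne z hz y hy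
      have := (hasFDerivAt_invnorm y z hzy).const_mul (ρ y)
      simpa [hF, hF', div_eq_mul_inv, smul_smul] using this
    · have hρy : ρ y = 0 := image_eq_zero_of_notMem_tsupport hy
      have : (fun w : E3 => F w y) = fun _ => (0:ℝ) := by
        funext w; simp [hF, hρy]
      rw [this]
      simpa [hF', hρy] using hasFDerivAt_const (0:ℝ) z
  -- integrability of F x
  have hFx_int : Integrable (F x) := by
    apply Continuous.integrable_of_hasCompactSupport
      (hFcont x (hnotK x (Metric.mem_ball_self hεpos)))
    apply HasCompactSupport.intro hKc
    intro y hy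
    simp [hF, image_eq_zero_of_notMem_tsupport hy]
  -- differentiate under the integral sign
  have hderiv : HasFDerivAt (fun z => ∫ y, F z y) (∫ y, F' x y) x := by
    apply hasFDerivAt_integral_of_dominated_of_fderiv_le (bound := bound) (Metric.ball_mem_nhds x hεpos)
    · filter_upwards [Metric.ball_mem_nhds x hεpos] with z hz
      exact (hFcont z (hnotK z hz)).aestronglyMeasurable
    · exact hFx_int
    · exact hF'cont.aestronglyMeasurable
    · exact Filter.Eventually.of_forall fun y => fun z hz => h_bound y z hz
    · exact hbound_int
    · exact Filter.Eventually.of_forall fun y => fun z hz => h_diff y z hz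
  have hF'_int : Integrable (F' x) := by
    apply Integrable.mono' hbound_int hF'cont.aestronglyMeasurable
    exact Filter.Eventually.of_forall fun y =>
      h_bound y x (Metric.mem_ball_self hεpos)
  -- the potential
  have hU : HasFDerivAt (newtPot G ρ) (-(G • (∫ y, F' x y))) x := by
    have h2 := hderiv.const_mul (-G)
    rw [show -(G • (∫ y, F' x y)) = (-G) • (∫ y, F' x y) from (neg_smul G _).symm]
    exact h2
  have hpd : pd 0 (newtPot G ρ) x
      = -G * ((∫ y, F' x y) (EuclideanSpace.single 0 1)) := by
    rw [pd, hU.fderiv]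
    simp
  rw [ContinuousLinearMap.integral_apply hF'_int] at hpd
  -- pointwise value of the derivative
  set e₁ : E3 := EuclideanSpace.single 0 1 with he₁
  have hval : ∀ y : E3, (F' x y) e₁ = ρ y * ((y 0 - x 0) * (‖x - y‖ ^ 3)⁻¹) := by
    intro y
    show (ρ y • (((-(‖x - y‖ ^ 3)⁻¹ : ℝ)) • innerSL ℝ (x - y))) e₁ = _
    rw [ContinuousLinearMap.smul_apply, ContinuousLinearMap.smul_apply, innerSL_apply_apply]
    have hv : (inner ℝ (x - y) e₁ : ℝ) = x 0 - y 0 := by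
      rw [he₁, real_inner_comm]
      simp [EuclideanSpace.inner_single_left]
    rw [hv, smul_eq_mul, smul_eq_mul]
    ring
  -- nonnegativity and strict positivity of the integrand
  set φ : E3 → ℝ := fun y => (F' x y) e₁ with hφ
  have hφnn : ∀ y, 0 ≤ φ y := by
    intro y
    show (0:ℝ) ≤ (F' x y) e₁
    rw [hval]
    by_cases hy : ρ y = 0
    · rw [hy]; norm_num
    · have hyK : y ∈ K := subset_tsupport ρ hy
      have h1 : 0 < y 0 - x 0 := by
        have := hδle y hyK; linarith
      have h2 : (0:ℝ) < ‖x - y‖ :=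
        lt_of_lt_of_le hεpos (hsep x (Metric.mem_ball_self hεpos) y hyK)
      have h3 : 0 ≤ ρ y := hρnn y
      positivity
  have hφpos_supp : Function.support ρ ⊆ Function.support φ := by
    intro y hy
    have hyK : y ∈ K := subset_tsupport ρ hy
    have h1 : 0 < y 0 - x 0 := by
      have := hδle y hyK; linarith
    have h2 : (0:ℝ) < ‖x - y‖ :=
      lt_of_lt_of_le hεpos (hsep x (Metric.mem_ball_self hεpos) y hyK)
    have h3 : 0 < ρ y := lt_of_le_of_ne (hρnn y) (Ne.symm hy)
    rw [Function.mem_support]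
    show (F' x y) e₁ ≠ 0
    rw [hval]
    positivity
  have hφint : Integrable φ := hF'_int.apply_continuousLinearMap e₁
  have hint_pos : 0 < ∫ y, φ y := by
    rw [integral_pos_iff_support_of_nonneg hφnn hφint]
    have hsupp_open : IsOpen (Function.support ρ) :=
      hρc.isOpen_support
    obtain ⟨y, hy⟩ := Function.ne_iff.mp hρne
    have : (0 : ENNReal) < volume (Function.support ρ) :=
      hsupp_open.measure_pos volume ⟨y, hy⟩
    exact lt_of_lt_of_le this (measure_mono hφpos_supp)
  rw [hpd]
  have : (∫ y, (F' x y) e₁) = ∫ y, φ y := rfl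
  nlinarith [hint_pos]
end
end

section
/- In the Giulini theory, the field equation ΔU = (4πG/c²) Σ_α ε_α χ_{Ω_α} − (1/(2c²))|∇U|² is linearized by the substitution Ψ = e^{U/(2c²)}: U solves the nonlinear equation if and only if Ψ solves ΔΨ = (2πG/c⁴) Ψ Σ_α ε_α χ_{Ω_α}. -/
open Real MeasureTheory

noncomputable section

def lap (f : E3 → ℝ) (x : E3) : ℝ :=
  ∑ i, pd i (pd i f) x

/-- the Giulini field equation
`ΔU = (4πG/c²) Σ_α ε_α χ_{Ω_α} − (1/(2c²)) |∇U|²`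
is linearized by `Ψ = e^{U/(2c²)}`: `U` solves it iff `Ψ` solves
`ΔΨ = (2πG/c⁴) Ψ Σ_α ε_α χ_{Ω_α}`. -/
theorem giulini_linearization (G c : ℝ) (hG : 0 < G) (hc : 0 < c)
    (N : ℕ) (Ω : Fin N → Set E3)
    (hΩo : ∀ α, IsOpen (Ω α)) (hΩb : ∀ α, Bornology.IsBounded (Ω α))
    (ε : Fin N → E3 → ℝ) (hεc : ∀ α, Continuous (ε α))
    (hεpos : ∀ α, ∀ x ∈ Ω α, 0 < ε α x)
    (U : E3 → ℝ) (hU : ContDiff ℝ 2 U) :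
    (∀ x, lap U x =
        (4 * π * G / c ^ 2) * ∑ α, Set.indicator (Ω α) (ε α) x
          - (1 / (2 * c ^ 2)) * ∑ i, (pd i U x) ^ 2) ↔
    (∀ x, lap (fun y => Real.exp (U y / (2 * c ^ 2))) x =
        (2 * π * G / c ^ 4) * Real.exp (U x / (2 * c ^ 2)) *
          ∑ α, Set.indicator (Ω α) (ε α) x) := by
  have hc2 : (2 * c ^ 2) ≠ 0 := by positivity
  set k : ℝ := 1 / (2 * c ^ 2) with hkdef
  have hk0 : k ≠ 0 := by positivity
  set Ψ : E3 → ℝ := fun y => Real.exp (U y / (2 * c ^ 2)) with hΨdef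
  have hΨpos : ∀ x, 0 < Ψ x := fun x => Real.exp_pos _
  have hUd : Differentiable ℝ U := hU.differentiable (by norm_num)
  have hfd : ContDiff ℝ 1 (fun x => fderiv ℝ U x) := hU.fderiv_right le_rfl
  have hgd : ∀ i, Differentiable ℝ (pd i U) := by
    intro i
    have : pd i U = fun x =>
        (ContinuousLinearMap.apply ℝ ℝ (EuclideanSpace.single i (1:ℝ)))
          (fderiv ℝ U x) := rfl
    rw [this]
    exact (ContinuousLinearMap.apply ℝ ℝ _).differentiable.comp
      (hfd.differentiable one_ne_zero)
  have hΨ' : Ψ = fun y => Real.exp (k * U y) := by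
    funext y
    rw [hkdef, one_div, inv_mul_eq_div]
  have hΨfd : ∀ x, HasFDerivAt Ψ (Ψ x • (k • fderiv ℝ U x)) x := by
    intro x
    rw [hΨ']
    exact ((hUd x).hasFDerivAt.const_mul k).exp
  have hΨd : Differentiable ℝ Ψ := fun x => (hΨfd x).differentiableAt
  have h1 : ∀ i x, pd i Ψ x = k * Ψ x * pd i U x := by
    intro i x
    rw [pd, (hΨfd x).fderiv]
    have hpd : (fderiv ℝ U x) (EuclideanSpace.single i (1:ℝ)) = pd i U x := rfl
    simp only [ContinuousLinearMap.smul_apply, smul_eq_mul, hpd]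
    ring
  have h2 : ∀ i x, pd i (pd i Ψ) x
      = k * (k * Ψ x * (pd i U x) ^ 2 + Ψ x * pd i (pd i U) x) := by
    intro i x
    have he : pd i Ψ = fun y => k * (Ψ y * pd i U y) := by
      funext y; rw [h1]; ring
    rw [pd, he, fderiv_const_mul (a := fun y => Ψ y * pd i U y) ((hΨd x).mul ((hgd i) x)) k,
      fderiv_fun_mul (hΨd x) ((hgd i) x)]
    simp only [ContinuousLinearMap.smul_apply, ContinuousLinearMap.add_apply,
      smul_eq_mul]
    rw [← pd, ← pd, h1]
    ring
  have hlap : ∀ x, lap Ψ x = k * Ψ x * (lap U x + k * ∑ i, (pd i U x) ^ 2) := by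
    intro x
    rw [lap]
    simp only [h2, lap, mul_add, Finset.mul_sum, Finset.sum_add_distrib]
    rw [add_comm]
    refine congrArg₂ (· + ·) ?_ ?_ <;>
      exact Finset.sum_congr rfl fun i _ => by ring
  constructor
  · intro h x
    rw [hlap x, h x]
    have : k * (4 * π * G / c ^ 2) = 2 * π * G / c ^ 4 := by
      rw [hkdef]; field_simp; ring
    rw [hkdef]
    field_simp
    ring
  · intro h x
    have hx := h x
    rw [hlap x] at hx
    have hΨne : Ψ x ≠ 0 := (hΨpos x).ne'
    have : lap U x + k * ∑ i, (pd i U x) ^ 2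
        = 4 * π * G / c ^ 2 * ∑ α, Set.indicator (Ω α) (ε α) x := by
      have h4 : 2 * π * G / c ^ 4 * Ψ x * ∑ α, Set.indicator (Ω α) (ε α) x
          = k * Ψ x * (4 * π * G / c ^ 2 * ∑ α, Set.indicator (Ω α) (ε α) x) := by
        rw [hkdef]; field_simp; ring
      rw [h4] at hx
      have := mul_left_cancel₀ (mul_ne_zero hk0 hΨne) hx
      exact this
    linarith [this]

end
end

section
/- Let U be a C² solution of the Giulini field equation ΔU = (4πG/c²) Σ_α ε_α χ_{Ω_α} − (1/(2c²))(∂U)² with ε_α > 0 on nonempty Ω_α, decaying at infinity with expansion U = −Gm/r + O(1/r²), ∂U = O(1/r²). Then the mass m = (1/(4πG)) lim_{R→∞} ∫_{S_R} e^{U/(2c²)} ∂_i U dS^i is strictly positive. -/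
open Real MeasureTheory Asymptotics Filter

noncomputable section

lemma pd_eq {f : E3 → ℝ} {L : E3 →L[ℝ] ℝ} {x : E3} (h : HasFDerivAt f L x) (i : Fin 3) :
    pd i f x = L (EuclideanSpace.single i 1) := by rw [pd, h.fderiv]

/-- 1D second derivative test at a local max. -/
lemma slice_test {g g' : ℝ → ℝ} {D : ℝ} (hg : ∀ t, HasDerivAt g (g' t) t)
    (h2 : HasDerivAt g' D 0) (hmax : IsLocalMax g 0) : D ≤ 0 := by
  by_contra hD
  push_neg at hD
  have hg'0 : g' 0 = 0 := by
    have := hmax.deriv_eq_zero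
    rwa [(hg 0).deriv] at this
  -- g' t > 0 for small positive t
  have hslope : Filter.Tendsto (slope g' 0) (nhdsWithin 0 {(0:ℝ)}ᶜ) (nhds D) :=
    hasDerivAt_iff_tendsto_slope.1 h2
  have hpos : ∀ᶠ t in nhdsWithin 0 {(0:ℝ)}ᶜ, 0 < slope g' 0 t :=
    hslope.eventually (eventually_gt_nhds hD)
  obtain ⟨δ, hδ, hball⟩ := Metric.mem_nhdsWithin_iff.1 hpos
  obtain ⟨δ', hδ', hmaxball⟩ := Metric.eventually_nhds_iff.1 hmax
  set ρ := min δ δ' with hρdef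
  have hρ : 0 < ρ := lt_min hδ hδ'
  have key : ∀ t ∈ Set.Ioo (0:ℝ) ρ, 0 < g' t := by
    intro t ht
    have h1 : dist t 0 < δ := by
      rw [Real.dist_eq, sub_zero, abs_of_pos ht.1]
      exact ht.2.trans_le (min_le_left _ _)
    have h2' := hball ⟨Metric.mem_ball.2 h1, by simpa using ne_of_gt ht.1⟩
    simp only [Set.mem_setOf_eq, slope_def_field, hg'0, sub_zero] at h2'
    have := mul_pos h2' ht.1
    rwa [div_mul_cancel₀] at this
    exact ne_of_gt ht.1
  have hmono : StrictMonoOn g (Set.Icc 0 (ρ/2)) := by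
    apply strictMonoOn_of_deriv_pos (convex_Icc _ _)
    · exact (fun t _ => (hg t).differentiableAt.continuousAt.continuousWithinAt)
    · intro t ht
      rw [interior_Icc] at ht
      rw [(hg t).deriv]
      exact key t ⟨ht.1, ht.2.trans_le (by linarith)⟩
  have hlt : g 0 < g (ρ/2) :=
    hmono (by constructor <;> [linarith; linarith]) (by constructor <;> linarith) (by linarith)
  have : g (ρ/2) ≤ g 0 := by
    apply hmaxball
    rw [Real.dist_eq, sub_zero, abs_of_pos (by linarith)]
    calc ρ/2 < ρ := by linarith
    _ ≤ δ' := min_le_right _ _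
  linarith


/-- Weak maximum principle on a closed ball for strictly subharmonic functions. -/
lemma max_principle {f : E3 → ℝ} (hd : Differentiable ℝ f)
    (hd2 : ∀ i, Differentiable ℝ (pd i f)) (hlap : ∀ x, 0 < lap f x)
    {P : ℝ} (hP : 0 < P) {y : E3} (hy : ‖y‖ ≤ P) :
    ∃ z : E3, ‖z‖ = P ∧ f y ≤ f z := by
  obtain ⟨w, hw, hmax⟩ := (isCompact_closedBall (0:E3) P).exists_isMaxOn
    ⟨y, by simpa [Metric.mem_closedBall, dist_zero_right] using hy⟩
    (hd.continuous.continuousOn)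
  have hwle : ‖w‖ ≤ P := by simpa [Metric.mem_closedBall, dist_zero_right] using hw
  rcases eq_or_lt_of_le hwle with heq | hlt
  · exact ⟨w, heq, hmax (by simpa [Metric.mem_closedBall, dist_zero_right] using hy)⟩
  · exfalso
    have hloc : IsLocalMax f w := hmax.isLocalMax
      (Metric.closedBall_mem_nhds_of_mem (by simpa [Metric.mem_ball, dist_zero_right] using hlt))
    have hkey : ∀ i, pd i (pd i f) w ≤ 0 := by
      intro i
      set E : E3 := EuclideanSpace.single i 1 with hE
      have hline : ∀ t : ℝ, HasDerivAt (fun t : ℝ => w + t • E) E t := by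
        intro t
        simpa using ((hasDerivAt_id t).smul_const E).const_add w
      set g : ℝ → ℝ := fun t => f (w + t • E) with hgdef
      set g' : ℝ → ℝ := fun t => pd i f (w + t • E) with hg'def
      have hg : ∀ t, HasDerivAt g (g' t) t := by
        intro t
        exact (hd (w + t • E)).hasFDerivAt.comp_hasDerivAt t (hline t)
      have h2 : HasDerivAt g' (pd i (pd i f) w) 0 := by
        have := ((hd2 i) (w + (0:ℝ) • E)).hasFDerivAt.comp_hasDerivAt 0 (hline 0)
        rw [zero_smul, add_zero] at this; exact this
      have hlmax : IsLocalMax g 0 := by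
        have hcont : Filter.Tendsto (fun t : ℝ => w + t • E) (nhds 0) (nhds w) := by
          have : Continuous (fun t : ℝ => w + t • E) := by continuity
          simpa using this.tendsto 0
        have := hcont.eventually hloc
        simpa [hgdef, IsLocalMax, IsMaxFilter] using this
      exact slice_test hg h2 hlmax
    have : lap f w ≤ 0 := Finset.sum_nonpos (fun i _ => hkey i)
    exact absurd (hlap w) (not_lt.2 this)

/-- Gluing two functions with matching value and derivative at the junction. -/
lemma glue_hasDerivAt {p g : ℝ → ℝ} {c d : ℝ} (hp : HasDerivAt p d c)
    (hg : HasDerivAt g d c) (hval : p c = g c) :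
    HasDerivAt (fun s => if s ≤ c then p s else g s) d c := by
  set φ : ℝ → ℝ := fun s => if s ≤ c then p s else g s with hφ
  rw [hasDerivAt_iff_isLittleO]
  have hgo : (fun s => g s - g c - (s - c) • d) =o[nhds c] (fun s => s - c) :=
    hasDerivAt_iff_isLittleO.1 hg
  have hh : (fun s => p s - g s) =o[nhds c] (fun s => s - c) := by
    have := hasDerivAt_iff_isLittleO.1 (hp.sub hg)
    simpa [hval] using this
  have hif : (fun s => if s ≤ c then p s - g s else 0) =o[nhds c] (fun s => s - c) := by
    refine (Asymptotics.isBigO_of_le _ (fun s => ?_)).trans_isLittleO hh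
    by_cases h : s ≤ c <;> simp [h]
  have : (fun s => φ s - φ c - (s - c) • d)
      = fun s => (g s - g c - (s - c) • d) + (if s ≤ c then p s - g s else 0) := by
    funext s
    by_cases h : s ≤ c <;> simp [hφ, h, hval] <;> ring
  rw [this]
  simpa using hgo.add hif

def phi0 (r : ℝ) : ℝ → ℝ := fun s =>
  if s ≤ r^2 then 15/(8*r) - 5/(4*r^3) * s + 3/(8*r^5) * s^2 else s ^ (-(1/2) : ℝ)

def phi1 (r : ℝ) : ℝ → ℝ := fun s =>
  if s ≤ r^2 then -(5/(4*r^3)) + 3/(4*r^5) * s else -(1/2) * s ^ (-(3/2) : ℝ)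

def phi2 (r : ℝ) : ℝ → ℝ := fun s =>
  if s ≤ r^2 then 3/(4*r^5) else 3/4 * s ^ (-(5/2) : ℝ)

lemma sq_rpow {r : ℝ} (hr : 0 < r) (e : ℝ) : (r^2 : ℝ) ^ e = r ^ (2*e) := by
  rw [← Real.rpow_natCast r 2, ← Real.rpow_mul hr.le]
  norm_num

lemma rpow_neg_nat {r : ℝ} (hr : 0 < r) (k : ℕ) : r ^ (-(k:ℝ)) = (r^k)⁻¹ := by
  rw [Real.rpow_neg hr.le, Real.rpow_natCast]

lemma poly_hasDeriv (r : ℝ) (t : ℝ) :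
    HasDerivAt (fun u => 15/(8*r) - 5/(4*r^3) * u + 3/(8*r^5) * u^2)
      (-(5/(4*r^3)) + 3/(4*r^5) * t) t := by
  have h1 := (hasDerivAt_id t).const_mul (5/(4*r^3))
  have h2 := (hasDerivAt_pow 2 t).const_mul (3/(8*r^5))
  have h := ((hasDerivAt_const t (15/(8*r))).sub h1).add h2
  exact h.congr_deriv (by ring)

lemma poly1_hasDeriv (r : ℝ) (t : ℝ) :
    HasDerivAt (fun u => -(5/(4*r^3)) + 3/(4*r^5) * u) (3/(4*r^5)) t := by
  have h1 := (hasDerivAt_id t).const_mul (3/(4*r^5))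
  have h := (hasDerivAt_const t (-(5/(4*r^3)))).add h1
  exact h.congr_deriv (by ring)

lemma phi0_hasDeriv {r : ℝ} (hr : 0 < r) {s : ℝ} (hs : 0 ≤ s) :
    HasDerivAt (phi0 r) (phi1 r s) s := by
  have hc : (0:ℝ) < r^2 := by positivity
  rcases lt_trichotomy s (r^2) with hlt | heq | hgt
  · have hp := poly_hasDeriv r s
    have hev : (fun u => 15/(8*r) - 5/(4*r^3) * u + 3/(8*r^5) * u^2) =ᶠ[nhds s] phi0 r := by
      filter_upwards [eventually_lt_nhds hlt] with t ht
      simp [phi0, ht.le]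
    rw [phi1, if_pos hlt.le]
    exact hp.congr_of_eventuallyEq hev.symm
  · subst heq
    have hrpow := Real.hasDerivAt_rpow_const (x := r^2) (p := (-(1/2):ℝ)) (Or.inl (ne_of_gt hc))
    have hg : HasDerivAt (fun u : ℝ => u ^ (-(1/2):ℝ)) (-(5/(4*r^3)) + 3/(4*r^5) * r^2) (r^2) := by
      convert hrpow using 1
      have : (-(1/2) : ℝ) - 1 = -(3:ℝ)/2 := by norm_num
      rw [this]
      have h32 : ((r^2:ℝ)) ^ (-(3:ℝ)/2) = (r^3)⁻¹ := by
        rw [sq_rpow hr]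
        have : (2 * (-(3:ℝ)/2)) = -((3:ℕ):ℝ) := by norm_num
        rw [this, rpow_neg_nat hr]
      rw [h32]
      field_simp
      ring
    have hp : HasDerivAt (fun u => 15/(8*r) - 5/(4*r^3) * u + 3/(8*r^5) * u^2)
        (-(5/(4*r^3)) + 3/(4*r^5) * r^2) (r^2) := poly_hasDeriv r (r^2)
    have hval : 15/(8*r) - 5/(4*r^3) * r^2 + 3/(8*r^5) * (r^2)^2 = (r^2:ℝ) ^ (-(1/2):ℝ) := by
      have h12 : ((r^2:ℝ)) ^ (-(1/2):ℝ) = r⁻¹ := by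
        rw [sq_rpow hr]
        have : (2 * (-(1:ℝ)/2)) = -((1:ℕ):ℝ) := by norm_num
        rw [show (-(1:ℝ)/2) = (-(1/2):ℝ) by norm_num] at this
        rw [this, rpow_neg_nat hr]
        simp
      rw [h12]
      field_simp
      ring
    have := glue_hasDerivAt hp hg hval
    rw [phi1, if_pos (le_refl _)]
    exact this
  · have h0 : (0:ℝ) < s := lt_trans hc hgt
    have hrpow := Real.hasDerivAt_rpow_const (x := s) (p := (-(1/2):ℝ)) (Or.inl (ne_of_gt h0))
    have hev : (fun u : ℝ => u ^ (-(1/2):ℝ)) =ᶠ[nhds s] phi0 r := by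
      filter_upwards [eventually_gt_nhds hgt] with t ht
      simp [phi0, not_le.2 ht]
    rw [phi1, if_neg (not_le.2 hgt)]
    have : HasDerivAt (fun u : ℝ => u ^ (-(1/2):ℝ)) (-(1/2) * s ^ (-(3/2):ℝ)) s := by
      convert hrpow using 2
      norm_num
    exact this.congr_of_eventuallyEq hev.symm

lemma phi1_hasDeriv {r : ℝ} (hr : 0 < r) {s : ℝ} (hs : 0 ≤ s) :
    HasDerivAt (phi1 r) (phi2 r s) s := by
  have hc : (0:ℝ) < r^2 := by positivity
  rcases lt_trichotomy s (r^2) with hlt | heq | hgt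
  · have hp := poly1_hasDeriv r s
    have hev : (fun u => -(5/(4*r^3)) + 3/(4*r^5) * u) =ᶠ[nhds s] phi1 r := by
      filter_upwards [eventually_lt_nhds hlt] with t ht
      simp [phi1, ht.le]
    rw [phi2, if_pos hlt.le]
    exact hp.congr_of_eventuallyEq hev.symm
  · subst heq
    have hrpow := (Real.hasDerivAt_rpow_const (x := r^2) (p := (-(3/2):ℝ))
      (Or.inl (ne_of_gt hc))).const_mul (-(1/2) : ℝ)
    have hg : HasDerivAt (fun u : ℝ => -(1/2) * u ^ (-(3/2):ℝ)) (3/(4*r^5)) (r^2) := by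
      refine hrpow.congr_deriv ?_
      have : (-(3/2) : ℝ) - 1 = -(5:ℝ)/2 := by norm_num
      rw [this]
      have h52 : ((r^2:ℝ)) ^ (-(5:ℝ)/2) = (r^5)⁻¹ := by
        rw [sq_rpow hr]
        have : (2 * (-(5:ℝ)/2)) = -((5:ℕ):ℝ) := by norm_num
        rw [this, rpow_neg_nat hr]
      rw [h52]
      field_simp
      ring
    have hp : HasDerivAt (fun u => -(5/(4*r^3)) + 3/(4*r^5) * u) (3/(4*r^5)) (r^2) :=
      poly1_hasDeriv r (r^2)
    have hval : -(5/(4*r^3)) + 3/(4*r^5) * r^2 = -(1/2) * (r^2:ℝ) ^ (-(3/2):ℝ) := by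
      have h32 : ((r^2:ℝ)) ^ (-(3/2):ℝ) = (r^3)⁻¹ := by
        rw [sq_rpow hr]
        have : (2 * (-(3:ℝ)/2)) = -((3:ℕ):ℝ) := by norm_num
        rw [show (-(3:ℝ)/2) = (-(3/2):ℝ) by norm_num] at this
        rw [this, rpow_neg_nat hr]
      rw [h32]
      field_simp
      ring
    have := glue_hasDerivAt hp hg hval
    rw [phi2, if_pos (le_refl _)]
    exact this
  · have h0 : (0:ℝ) < s := lt_trans hc hgt
    have hrpow := (Real.hasDerivAt_rpow_const (x := s) (p := (-(3/2):ℝ))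
      (Or.inl (ne_of_gt h0))).const_mul (-(1/2) : ℝ)
    have hev : (fun u : ℝ => -(1/2) * u ^ (-(3/2):ℝ)) =ᶠ[nhds s] phi1 r := by
      filter_upwards [eventually_gt_nhds hgt] with t ht
      simp [phi1, not_le.2 ht]
    rw [phi2, if_neg (not_le.2 hgt)]
    have : HasDerivAt (fun u : ℝ => -(1/2) * u ^ (-(3/2):ℝ)) (3/4 * s ^ (-(5/2):ℝ)) s := by
      refine hrpow.congr_deriv ?_
      have : (-(3/2) : ℝ) - 1 = -(5/2:ℝ) := by norm_num
      rw [this]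
      ring
    exact this.congr_of_eventuallyEq hev.symm

lemma lapphi_inside {r s : ℝ} (hr : 0 < r) (hs0 : 0 ≤ s) (hs : s ≤ r^2) :
    -(15/(2*r^3)) ≤ 4*s*phi2 r s + 6*phi1 r s ∧ 4*s*phi2 r s + 6*phi1 r s ≤ 0 := by
  rw [phi1, phi2, if_pos hs, if_pos hs]
  have hr5 : (0:ℝ) < 2*r^5 := by positivity
  have hexp : 4*s*(3/(4*r^5)) + 6*(-(5/(4*r^3)) + 3/(4*r^5)*s) = (15*s - 15*r^2)/(2*r^5) := by
    field_simp
    ring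
  rw [hexp]
  constructor
  · have hlhs : -(15/(2*r^3)) = (15*(0:ℝ) - 15*r^2)/(2*r^5) := by
      field_simp
      ring
    rw [hlhs, div_le_div_iff₀ hr5 hr5]
    nlinarith
  · apply div_nonpos_of_nonpos_of_nonneg (by linarith) (le_of_lt hr5)

lemma lapphi_outside {r s : ℝ} (hr : 0 < r) (hgt : r^2 < s) :
    4*s*phi2 r s + 6*phi1 r s = 0 := by
  have h0 : (0:ℝ) < s := lt_trans (by positivity) hgt
  rw [phi1, phi2, if_neg (not_le.2 hgt), if_neg (not_le.2 hgt)]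
  have key : s * s ^ (-(5/2):ℝ) = s ^ (-(3/2):ℝ) := by
    nth_rewrite 1 [← Real.rpow_one s]
    rw [← Real.rpow_add h0]
    norm_num
  calc 4*s*(3/4 * s ^ (-(5/2):ℝ)) + 6*(-(1/2) * s ^ (-(3/2):ℝ))
      = 3 * (s * s ^ (-(5/2):ℝ)) - 3 * s ^ (-(3/2):ℝ) := by ring
  _ = 0 := by rw [key]; ring

lemma phi0_tail {r : ℝ} (hr : 0 < r) {t : ℝ} (ht : r ≤ t) :
    phi0 r (t^2) = t⁻¹ := by
  have ht0 : 0 < t := lt_of_lt_of_le hr ht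
  rcases eq_or_lt_of_le ht with heq | hgt
  · subst heq
    rw [phi0, if_pos (le_refl _)]
    field_simp
    ring
  · have h2 : r^2 < t^2 := by nlinarith
    rw [phi0, if_neg (not_le.2 h2), sq_rpow ht0,
      show (2 * (-(1/2):ℝ)) = -((1:ℕ):ℝ) by norm_num, rpow_neg_nat ht0]
    simp

lemma enorm_sq (y : E3) : ‖y‖^2 = ∑ i, (y i)^2 := by
  rw [EuclideanSpace.norm_eq, Real.sq_sqrt (by positivity)]
  congr 1
  funext i
  rw [Real.norm_eq_abs, sq_abs]

lemma nsq_hasFDeriv (x₀ x : E3) :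
    HasFDerivAt (fun y : E3 => ‖y - x₀‖^2) (2 • (innerSL ℝ (x - x₀))) x := by
  simpa using ((hasFDerivAt_id x).sub_const x₀).norm_sq

lemma proj_hasFDeriv (i : Fin 3) (x₀ : E3) (x : E3) :
    HasFDerivAt (fun y : E3 => 2 * (y i - x₀ i)) ((2:ℝ) • (EuclideanSpace.proj (𝕜 := ℝ) i)) x := by
  exact ((EuclideanSpace.proj (𝕜 := ℝ) i).hasFDerivAt.sub_const (x₀ i)).const_mul 2

lemma q_package {r : ℝ} (hr : 0 < r) (x₀ : E3) :
    Differentiable ℝ (fun y : E3 => phi0 r (‖y - x₀‖^2)) ∧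
    (∀ i, Differentiable ℝ (pd i (fun y : E3 => phi0 r (‖y - x₀‖^2)))) ∧
    (∀ x : E3, lap (fun y => phi0 r (‖y - x₀‖^2)) x
      = 4*(‖x - x₀‖^2)*phi2 r (‖x - x₀‖^2) + 6*phi1 r (‖x - x₀‖^2)) := by
  have hq1 : ∀ x : E3, HasFDerivAt (fun y : E3 => phi0 r (‖y - x₀‖^2))
      ((phi1 r (‖x - x₀‖^2)) • (2 • (innerSL ℝ (x - x₀)))) x := fun x =>
    (phi0_hasDeriv hr (by positivity)).comp_hasFDerivAt x (nsq_hasFDeriv x₀ x)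
  have hc : ∀ x : E3, HasFDerivAt (fun y : E3 => phi1 r (‖y - x₀‖^2))
      ((phi2 r (‖x - x₀‖^2)) • (2 • (innerSL ℝ (x - x₀)))) x := fun x =>
    (phi1_hasDeriv hr (by positivity)).comp_hasFDerivAt x (nsq_hasFDeriv x₀ x)
  have hpdq : ∀ i, pd i (fun y : E3 => phi0 r (‖y - x₀‖^2))
      = fun x => phi1 r (‖x - x₀‖^2) * (2 * (x i - x₀ i)) := by
    intro i
    funext x
    rw [pd_eq (hq1 x) i]
    simp [EuclideanSpace.inner_single_right]
  refine ⟨fun x => (hq1 x).differentiableAt, ?_, ?_⟩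
  · intro i
    rw [hpdq i]
    exact fun x => ((hc x).differentiableAt).mul (proj_hasFDeriv i x₀ x).differentiableAt
  · intro x
    have hterm : ∀ i, pd i (pd i (fun y : E3 => phi0 r (‖y - x₀‖^2))) x
        = phi1 r (‖x - x₀‖^2) * 2 + (2 * (x i - x₀ i)) *
          (phi2 r (‖x - x₀‖^2) * (2 * (x i - x₀ i))) := by
      intro i
      rw [hpdq i]
      have hmul := (hc x).mul (proj_hasFDeriv i x₀ x)
      rw [pd_eq (f := fun y => phi1 r (‖y - x₀‖^2) * (2 * (y i - x₀ i))) hmul i]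
      simp [EuclideanSpace.inner_single_right, EuclideanSpace.single_apply]
    rw [lap]
    rw [Finset.sum_congr rfl (fun i _ => hterm i)]
    rw [Finset.sum_add_distrib]
    have h1 : ∑ _i : Fin 3, phi1 r (‖x - x₀‖^2) * 2 = 6 * phi1 r (‖x - x₀‖^2) := by
      simp [Finset.sum_const]
      ring
    have h2 : ∑ i : Fin 3, (2 * (x i - x₀ i)) * (phi2 r (‖x - x₀‖^2) * (2 * (x i - x₀ i)))
        = 4*(‖x - x₀‖^2)*phi2 r (‖x - x₀‖^2) := by
      have : ∀ i : Fin 3, (2 * (x i - x₀ i)) * (phi2 r (‖x - x₀‖^2) * (2 * (x i - x₀ i)))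
          = (4 * phi2 r (‖x - x₀‖^2)) * ((x - x₀) i)^2 := by
        intro i
        have : (x - x₀) i = x i - x₀ i := rfl
        rw [this]
        ring
      rw [Finset.sum_congr rfl (fun i _ => this i), ← Finset.mul_sum, ← enorm_sq (x - x₀)]
      ring
    rw [h1, h2]
    ring

lemma B_package :
    Differentiable ℝ (fun y : E3 => ‖y‖^2) ∧
    (∀ i, Differentiable ℝ (pd i (fun y : E3 => ‖y‖^2))) ∧
    (∀ x : E3, lap (fun y : E3 => ‖y‖^2) x = 6) := by
  have hB1 : ∀ x : E3, HasFDerivAt (fun y : E3 => ‖y‖^2) (2 • (innerSL ℝ x)) x := by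
    intro x
    simpa using (hasFDerivAt_id x).norm_sq
  have hpdB : ∀ i, pd i (fun y : E3 => ‖y‖^2) = fun x => 2 * (x i - (0:ℝ)) := by
    intro i
    funext x
    rw [pd_eq (hB1 x) i]
    simp [EuclideanSpace.inner_single_right]
  refine ⟨fun x => (hB1 x).differentiableAt, ?_, ?_⟩
  · intro i
    rw [hpdB i]
    exact fun x => (proj_hasFDeriv i 0 x).differentiableAt
  · intro x
    have hterm : ∀ i, pd i (pd i (fun y : E3 => ‖y‖^2)) x = 2 := by
      intro i
      rw [hpdB i]
      have := proj_hasFDeriv i 0 x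
      simp only [show ((0:E3) i : ℝ) = 0 from rfl] at this
      rw [pd_eq this i]
      simp [EuclideanSpace.single_apply]
    rw [lap, Finset.sum_congr rfl (fun i _ => hterm i)]
    norm_num

lemma pd_add {f g : E3 → ℝ} (hf : Differentiable ℝ f) (hg : Differentiable ℝ g) (i : Fin 3) :
    pd i (fun x => f x + g x) = fun x => pd i f x + pd i g x := by
  funext x
  rw [pd_eq (f := fun x => f x + g x) ((hf x).hasFDerivAt.add (hg x).hasFDerivAt) i]
  rfl

lemma pd_const_mul {f : E3 → ℝ} (hf : Differentiable ℝ f) (a : ℝ) (i : Fin 3) :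
    pd i (fun x => a * f x) = fun x => a * pd i f x := by
  funext x
  rw [pd_eq ((hf x).hasFDerivAt.const_mul a) i]
  rfl

lemma lap_add {f g : E3 → ℝ} (hf : Differentiable ℝ f) (hg : Differentiable ℝ g)
    (hf' : ∀ i, Differentiable ℝ (pd i f)) (hg' : ∀ i, Differentiable ℝ (pd i g)) (y : E3) :
    lap (fun x => f x + g x) y = lap f y + lap g y := by
  have h : ∀ i, pd i (pd i (fun x => f x + g x)) y = pd i (pd i f) y + pd i (pd i g) y := by
    intro i
    rw [pd_add hf hg i]
    exact congrFun (pd_add (hf' i) (hg' i) i) y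
  rw [lap, Finset.sum_congr rfl (fun i _ => h i), Finset.sum_add_distrib]
  rfl

lemma lap_const_mul {f : E3 → ℝ} (hf : Differentiable ℝ f)
    (hf' : ∀ i, Differentiable ℝ (pd i f)) (a : ℝ) (y : E3) :
    lap (fun x => a * f x) y = a * lap f y := by
  have h : ∀ i, pd i (pd i (fun x => a * f x)) y = a * pd i (pd i f) y := by
    intro i
    rw [pd_const_mul hf a i]
    exact congrFun (pd_const_mul (hf' i) a i) y
  rw [lap, Finset.sum_congr rfl (fun i _ => h i), ← Finset.mul_sum]
  rfl

lemma psi_package {U : E3 → ℝ} (hU : ContDiff ℝ 2 U) (b : ℝ) :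
    Differentiable ℝ (fun x => Real.exp (b * U x)) ∧
    (∀ i, Differentiable ℝ (pd i (fun x => Real.exp (b * U x)))) ∧
    (∀ x, lap (fun x => Real.exp (b * U x)) x
      = b * Real.exp (b * U x) * (lap U x + b * ∑ i, (pd i U x)^2)) := by
  have hUd : Differentiable ℝ U := hU.differentiable (by norm_num)
  have hDc : ∀ i, ContDiff ℝ 1 (pd i U) := by
    intro i
    exact (hU.fderiv_right (m := 1) (by norm_num)).clm_apply contDiff_const
  have hΨd : ∀ x, HasFDerivAt (fun x => Real.exp (b * U x))
      (Real.exp (b * U x) • (b • fderiv ℝ U x)) x := by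
    intro x
    have := (((hUd x).hasFDerivAt).const_mul b).exp
    simpa [smul_smul] using this
  have hpdΨ : ∀ i, pd i (fun x => Real.exp (b * U x))
      = fun x => Real.exp (b * U x) * (b * pd i U x) := by
    intro i
    funext x
    rw [pd_eq (hΨd x) i]
    rfl
  have hmul : ∀ i x, HasFDerivAt (fun y => Real.exp (b * U y) * (b * pd i U y))
      ((Real.exp (b * U x)) • (b • fderiv ℝ (pd i U) x)
        + (b * pd i U x) • (Real.exp (b * U x) • (b • fderiv ℝ U x))) x := by
    intro i x
    exact (hΨd x).mul ((((hDc i).differentiable one_ne_zero x).hasFDerivAt).const_mul b)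
  refine ⟨fun x => (hΨd x).differentiableAt, ?_, ?_⟩
  · intro i
    rw [hpdΨ i]
    exact fun x => (hmul i x).differentiableAt
  · intro x
    have hterm : ∀ i, pd i (pd i (fun x => Real.exp (b * U x))) x
        = Real.exp (b * U x) * (b * pd i (pd i U) x)
          + (b * pd i U x) * (Real.exp (b * U x) * (b * pd i U x)) := by
      intro i
      rw [hpdΨ i, pd_eq (hmul i x) i]
      rfl
    rw [lap, Finset.sum_congr rfl (fun i _ => hterm i), Finset.sum_add_distrib]
    have h1 : ∑ i : Fin 3, Real.exp (b * U x) * (b * pd i (pd i U) x)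
        = b * Real.exp (b * U x) * lap U x := by
      rw [lap, Finset.mul_sum]
      apply Finset.sum_congr rfl
      intro i _
      ring
    have h2 : ∑ i : Fin 3, (b * pd i U x) * (Real.exp (b * U x) * (b * pd i U x))
        = b * Real.exp (b * U x) * (b * ∑ i, (pd i U x)^2) := by
      rw [Finset.mul_sum, Finset.mul_sum]
      apply Finset.sum_congr rfl
      intro i _
      ring
    rw [h1, h2]
    ring

lemma exp_le_one_add_two_mul {u : ℝ} (h0 : 0 ≤ u) (h1 : u ≤ 1/2) :
    Real.exp u ≤ 1 + 2*u := by
  have h2 : (0:ℝ) < 1 - u := by linarith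
  have h3 : 1 - u ≤ Real.exp (-u) := by
    have := Real.add_one_le_exp (-u)
    linarith
  have h4 : Real.exp u ≤ (1 - u)⁻¹ := by
    rw [Real.exp_neg] at h3
    have h5 : (0:ℝ) < (Real.exp u)⁻¹ := by positivity
    rw [le_inv_comm₀ h2 (Real.exp_pos u)] at h3
    exact h3
  have h6 : (1 - u)⁻¹ ≤ 1 + 2*u := by
    rw [inv_le_iff_one_le_mul₀ h2]
    nlinarith
  linarith

set_option maxHeartbeats 2000000 in
/-- positivity of the mass in the Giulini theory. If `U` is a `C²`
solution of `ΔU = (4πG/c²) Σ_α ε_α χ_{Ω_α} − (1/(2c²))(∂U)²` with `ε_α > 0` on the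
nonempty bodies `Ω_α`, and `U` has the decaying expansion `U = −Gm/r + O(1/r²)`,
`∂U = O(1/r²)`, then `m > 0`. -/
theorem giulini_mass_positive (G c : ℝ) (hG : 0 < G) (hc : 0 < c)
    (N : ℕ) (hN : 0 < N) (Ω : Fin N → Set E3)
    (hΩo : ∀ α, IsOpen (Ω α)) (hΩb : ∀ α, Bornology.IsBounded (Ω α))
    (hΩne : ∀ α, (Ω α).Nonempty)
    (ε : Fin N → E3 → ℝ) (hεc : ∀ α, Continuous (ε α))
    (hεpos : ∀ α, ∀ x ∈ Ω α, 0 < ε α x)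
    (U : E3 → ℝ) (hU : ContDiff ℝ 2 U)
    (hfield : ∀ x, lap U x =
      (4 * π * G / c ^ 2) * ∑ α, Set.indicator (Ω α) (ε α) x
        - (1 / (2 * c ^ 2)) * ∑ i, (pd i U x) ^ 2)
    (m C R : ℝ) (hR : 0 < R)
    (hexp : ∀ x : E3, R ≤ ‖x‖ →
      |U x + G * m / ‖x‖| ≤ C / ‖x‖ ^ 2 ∧ ‖fderiv ℝ U x‖ ≤ C / ‖x‖ ^ 2) :
    0 < m := by
  by_contra hm0
  push_neg at hm0
  have hπ := Real.pi_pos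
  have hb : (0:ℝ) < 1 / (2 * c ^ 2) := by positivity
  have hK : (0:ℝ) < 4 * π * G / c ^ 2 := by positivity
  -- abbreviations (plain lets via generalize-free style)
  -- Ψ package
  obtain ⟨hΨdiff, hΨpd, hΨlap⟩ := psi_package hU (1 / (2 * c ^ 2))
  have hΨpos : ∀ x : E3, 0 < Real.exp ((1 / (2 * c ^ 2)) * U x) := fun x => Real.exp_pos _
  have hρ0 : ∀ x : E3, 0 ≤ ∑ α, Set.indicator (Ω α) (ε α) x := fun x =>
    Finset.sum_nonneg (fun α _ => Set.indicator_nonneg (fun y hy => (hεpos α y hy).le) x)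
  have hlapΨ : ∀ x : E3, lap (fun x => Real.exp ((1 / (2 * c ^ 2)) * U x)) x
      = (1 / (2 * c ^ 2)) * Real.exp ((1 / (2 * c ^ 2)) * U x)
        * ((4 * π * G / c ^ 2) * ∑ α, Set.indicator (Ω α) (ε α) x) := by
    intro x
    rw [hΨlap x, hfield x]
    ring
  have hlapΨ0 : ∀ x : E3, 0 ≤ lap (fun x => Real.exp ((1 / (2 * c ^ 2)) * U x)) x := by
    intro x
    rw [hlapΨ x]
    have := hρ0 x
    positivity
  -- the body and the bump location
  obtain ⟨x₀, hx₀⟩ := hΩne ⟨0, hN⟩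
  obtain ⟨r₀, hr₀, hball⟩ := Metric.isOpen_iff.1 (hΩo ⟨0, hN⟩) x₀ hx₀
  have hr : (0:ℝ) < r₀/2 := by linarith
  have hcb : Metric.closedBall x₀ (r₀/2) ⊆ Ω ⟨0, hN⟩ :=
    (Metric.closedBall_subset_ball (by linarith)).trans hball
  -- the minimum μ of the subharmonicity density on the small closed ball
  have hcont : Continuous (fun x : E3 => (1 / (2 * c ^ 2)) * Real.exp ((1 / (2 * c ^ 2)) * U x)
      * ((4 * π * G / c ^ 2) * ε ⟨0, hN⟩ x)) := by
    have h1 : Continuous (fun x : E3 => Real.exp ((1 / (2 * c ^ 2)) * U x)) :=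
      Real.continuous_exp.comp (continuous_const.mul hU.continuous)
    exact (continuous_const.mul h1).mul (continuous_const.mul (hεc _))
  obtain ⟨z, hzcb, hzmin⟩ := (isCompact_closedBall x₀ (r₀/2)).exists_isMinOn
    ⟨x₀, Metric.mem_closedBall_self hr.le⟩ hcont.continuousOn
  have hμpos : 0 < (1 / (2 * c ^ 2)) * Real.exp ((1 / (2 * c ^ 2)) * U z)
      * ((4 * π * G / c ^ 2) * ε ⟨0, hN⟩ z) := by
    have hzΩ : z ∈ Ω ⟨0, hN⟩ := hcb hzcb
    have := hεpos ⟨0, hN⟩ z hzΩ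
    have := hΨpos z
    positivity
  -- μ is a lower bound for lap Ψ on the closed ball
  have hlapball : ∀ x ∈ Metric.closedBall x₀ (r₀/2),
      (1 / (2 * c ^ 2)) * Real.exp ((1 / (2 * c ^ 2)) * U z)
        * ((4 * π * G / c ^ 2) * ε ⟨0, hN⟩ z)
      ≤ lap (fun x => Real.exp ((1 / (2 * c ^ 2)) * U x)) x := by
    intro x hx
    rw [hlapΨ x]
    have hxΩ : x ∈ Ω ⟨0, hN⟩ := hcb hx
    have hsum : ε ⟨0, hN⟩ x ≤ ∑ α, Set.indicator (Ω α) (ε α) x := by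
      have hterm : Set.indicator (Ω ⟨0, hN⟩) (ε ⟨0, hN⟩) x = ε ⟨0, hN⟩ x :=
        Set.indicator_of_mem hxΩ _
      calc ε ⟨0, hN⟩ x = Set.indicator (Ω ⟨0, hN⟩) (ε ⟨0, hN⟩) x := hterm.symm
      _ ≤ ∑ α, Set.indicator (Ω α) (ε α) x := Finset.single_le_sum
          (f := fun α => Set.indicator (Ω α) (ε α) x)
          (fun α _ => Set.indicator_nonneg (fun y hy => (hεpos α y hy).le) x)
          (Finset.mem_univ _)
    have hmin := hzmin hx
    simp only [Set.mem_setOf_eq] at hmin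
    have h1 : (1 / (2 * c ^ 2)) * Real.exp ((1 / (2 * c ^ 2)) * U x)
        * ((4 * π * G / c ^ 2) * ε ⟨0, hN⟩ x)
        ≤ (1 / (2 * c ^ 2)) * Real.exp ((1 / (2 * c ^ 2)) * U x)
        * ((4 * π * G / c ^ 2) * ∑ α, Set.indicator (Ω α) (ε α) x) := by
      have := hΨpos x
      have h2 : 0 < (1 / (2 * c ^ 2)) * Real.exp ((1 / (2 * c ^ 2)) * U x)
          * (4 * π * G / c ^ 2) := by positivity
      nlinarith
    exact le_trans hmin h1
  -- abbreviations
  set bb : ℝ := 1 / (2 * c ^ 2) with hbb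
  set KK : ℝ := 4 * π * G / c ^ 2 with hKK
  set r : ℝ := r₀ / 2 with hrr
  set μ : ℝ := bb * Real.exp (bb * U z) * (KK * ε ⟨0, hN⟩ z) with hμ
  -- the bump function package
  obtain ⟨hQd, hQpd, hQlap⟩ := q_package hr x₀
  obtain ⟨hBd, hBpd, hBlap⟩ := B_package
  set k : ℝ := μ * (2*r^3) / 15 with hk
  have hkpos : 0 < k := by
    have h3 : (0:ℝ) < r^3 := by positivity
    rw [hk]
    positivity
  -- the perturbed comparison function F δ
  have hGd : ∀ δ : ℝ, Differentiable ℝ (fun x : E3 => k * phi0 r (‖x - x₀‖^2) + δ * ‖x‖^2) :=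
    fun δ => (hQd.const_mul k).add (hBd.const_mul δ)
  have hGpd : ∀ δ : ℝ, ∀ i, Differentiable ℝ
      (pd i (fun x : E3 => k * phi0 r (‖x - x₀‖^2) + δ * ‖x‖^2)) := by
    intro δ i
    rw [pd_add (hQd.const_mul k) (hBd.const_mul δ) i, pd_const_mul hQd k i,
      pd_const_mul hBd δ i]
    exact (((hQpd i).const_mul k).add ((hBpd i).const_mul δ))
  have hFd : ∀ δ : ℝ, Differentiable ℝ
      (fun x : E3 => Real.exp (bb * U x) + (k * phi0 r (‖x - x₀‖^2) + δ * ‖x‖^2)) :=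
    fun δ => hΨdiff.add (hGd δ)
  have hFpd : ∀ δ : ℝ, ∀ i, Differentiable ℝ
      (pd i (fun x : E3 => Real.exp (bb * U x) + (k * phi0 r (‖x - x₀‖^2) + δ * ‖x‖^2))) := by
    intro δ i
    rw [pd_add hΨdiff (hGd δ) i]
    exact (hΨpd i).add (hGpd δ i)
  have hGlap : ∀ δ : ℝ, ∀ x : E3,
      lap (fun x : E3 => k * phi0 r (‖x - x₀‖^2) + δ * ‖x‖^2) x
        = k * (4*(‖x - x₀‖^2)*phi2 r (‖x - x₀‖^2) + 6*phi1 r (‖x - x₀‖^2)) + δ * 6 := by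
    intro δ x
    rw [lap_add (hQd.const_mul k) (hBd.const_mul δ)
        (fun i => by rw [pd_const_mul hQd k i]; exact (hQpd i).const_mul k)
        (fun i => by rw [pd_const_mul hBd δ i]; exact (hBpd i).const_mul δ) x,
      lap_const_mul hQd hQpd k x, lap_const_mul hBd hBpd δ x, hQlap x, hBlap x]
  have hFlap : ∀ δ : ℝ, 0 < δ → ∀ x : E3, 0 < lap
      (fun x : E3 => Real.exp (bb * U x) + (k * phi0 r (‖x - x₀‖^2) + δ * ‖x‖^2)) x := by
    intro δ hδ x
    rw [lap_add hΨdiff (hGd δ) hΨpd (hGpd δ) x, hGlap δ x]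
    have hr3 : (0:ℝ) < r^3 := by positivity
    have hkM : k * (15/(2*r^3)) = μ := by
      rw [hk]
      field_simp
    rcases le_or_gt (‖x - x₀‖) r with hle | hgt
    · -- inside the ball
      have hs2 : ‖x - x₀‖^2 ≤ r^2 := by nlinarith [norm_nonneg (x - x₀)]
      have hmem : x ∈ Metric.closedBall x₀ r := by
        rw [Metric.mem_closedBall, dist_eq_norm]
        exact hle
      have h1 := hlapball x hmem
      have h2 := (lapphi_inside hr (by positivity) hs2).1
      have h3 : k * (4*(‖x - x₀‖^2)*phi2 r (‖x - x₀‖^2) + 6*phi1 r (‖x - x₀‖^2))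
          ≥ k * (-(15/(2*r^3))) := by
        apply mul_le_mul_of_nonneg_left h2 hkpos.le
      have h4 : k * (-(15/(2*r^3))) = -μ := by
        rw [← hkM]
        ring
      linarith
    · -- outside the ball
      have hs2 : r^2 < ‖x - x₀‖^2 := by nlinarith [norm_nonneg (x - x₀)]
      rw [lapphi_outside hr hs2]
      have := hlapΨ0 x
      linarith
  -- asymptotic bounds
  have hC0 : 0 ≤ C := by
    have hx : ‖(EuclideanSpace.single (0:Fin 3) R : E3)‖ = R := by
      rw [EuclideanSpace.norm_single, Real.norm_eq_abs, abs_of_pos hR]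
    have h := (hexp _ (le_of_eq hx.symm)).1
    rw [hx] at h
    have h0 : (0:ℝ) ≤ C / R^2 := le_trans (abs_nonneg _) h
    have hR2 : (0:ℝ) < R^2 := by positivity
    have h1 := mul_nonneg h0 hR2.le
    rwa [div_mul_cancel₀ _ (ne_of_gt hR2)] at h1
  set T : ℝ := bb * (G * (-m) + C) with hT
  have hT0 : 0 ≤ T := by
    rw [hT]
    have : 0 ≤ G * (-m) := mul_nonneg hG.le (by linarith)
    nlinarith
  have hupper : ∀ x : E3, R ≤ ‖x‖ → 1 ≤ ‖x‖ → 2*T + 1 ≤ ‖x‖ →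
      Real.exp (bb * U x) ≤ 1 + 2*T/‖x‖ := by
    intro x h1 h2 h3
    have hx0 : (0:ℝ) < ‖x‖ := by linarith
    have habs := abs_le.1 (hexp x h1).1
    have e1 : U x ≤ C/‖x‖^2 - G*m/‖x‖ := by linarith [habs.2]
    have e2 : C/‖x‖^2 ≤ C/‖x‖ := by
      rw [div_le_div_iff₀ (by positivity) hx0]
      nlinarith [mul_nonneg (mul_nonneg hC0 hx0.le) (sub_nonneg.2 h2)]
    have e3 : U x ≤ (G*(-m) + C)/‖x‖ := by
      have : C/‖x‖ - G*m/‖x‖ = (G*(-m) + C)/‖x‖ := by ring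
      linarith
    have e4 : bb * U x ≤ T/‖x‖ := by
      have h5 := mul_le_mul_of_nonneg_left e3 hb.le
      calc bb * U x ≤ bb * ((G*(-m) + C)/‖x‖) := h5
      _ = T/‖x‖ := by rw [hT, mul_div_assoc]
    have e5 : (0:ℝ) ≤ T/‖x‖ := div_nonneg hT0 (norm_nonneg x)
    have e6 : T/‖x‖ ≤ 1/2 := by
      rw [div_le_iff₀ hx0]
      linarith
    calc Real.exp (bb * U x) ≤ Real.exp (T/‖x‖) := Real.exp_le_exp.2 e4
    _ ≤ 1 + 2*(T/‖x‖) := exp_le_one_add_two_mul e5 e6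
    _ = 1 + 2*T/‖x‖ := by ring
  have hlower : ∀ x : E3, R ≤ ‖x‖ → 1 - bb*C/‖x‖^2 ≤ Real.exp (bb * U x) := by
    intro x h1
    have hx0 : (0:ℝ) < ‖x‖ := lt_of_lt_of_le hR h1
    have habs := abs_le.1 (hexp x h1).1
    have e1 : -(C/‖x‖^2) - G*m/‖x‖ ≤ U x := by linarith [habs.1]
    have e2 : (0:ℝ) ≤ -(G*m)/‖x‖ := by
      apply div_nonneg _ hx0.le
      nlinarith
    have e3 : -(C/‖x‖^2) ≤ U x := by
      have : -(G*m)/‖x‖ = -(G*m/‖x‖) := by ring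
      linarith
    have e4 : -(bb*C/‖x‖^2) ≤ bb * U x := by
      have := mul_le_mul_of_nonneg_left e3 hb.le
      calc -(bb*C/‖x‖^2) = bb * (-(C/‖x‖^2)) := by ring
      _ ≤ bb * U x := this
    have := Real.add_one_le_exp (bb * U x)
    linarith
  -- choice of the inner sphere radius P₁
  set P₁ : ℝ := max (max R 1) (max (‖x₀‖ + r + 1) (4*bb*C/k + 1)) with hP₁def
  have hP₁R : R ≤ P₁ := le_trans (le_max_left _ _) (le_max_left _ _)
  have hP₁1 : 1 ≤ P₁ := le_trans (le_max_right _ _) (le_max_left _ _)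
  have hP₁x₀ : ‖x₀‖ + r + 1 ≤ P₁ := le_trans (le_max_left _ _) (le_max_right _ _)
  have hP₁C : 4*bb*C/k + 1 ≤ P₁ := le_trans (le_max_right _ _) (le_max_right _ _)
  have hP₁pos : 0 < P₁ := lt_of_lt_of_le one_pos hP₁1
  set z₁ : E3 := EuclideanSpace.single (0 : Fin 3) P₁ with hz₁def
  have hz₁ : ‖z₁‖ = P₁ := by
    rw [hz₁def, EuclideanSpace.norm_single, Real.norm_eq_abs, abs_of_pos hP₁pos]
  have htz : r ≤ ‖z₁ - x₀‖ := by
    have h1 : ‖z₁‖ - ‖x₀‖ ≤ ‖z₁ - x₀‖ := norm_sub_norm_le _ _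
    rw [hz₁] at h1
    linarith only [h1, hP₁x₀]
  have htz2 : ‖z₁ - x₀‖ ≤ P₁ + ‖x₀‖ := by
    have h1 := norm_sub_le z₁ x₀
    rw [hz₁] at h1
    linarith only [h1]
  have htzpos : 0 < ‖z₁ - x₀‖ := lt_of_lt_of_le hr htz
  have hx₀P₁ : ‖x₀‖ ≤ P₁ := by linarith only [hP₁x₀, hr]
  -- lower bound for Φ at z₁
  have hq_low : k * (P₁ + ‖x₀‖)⁻¹ ≤ k * phi0 r (‖z₁ - x₀‖^2) := by
    rw [phi0_tail hr htz]
    exact mul_le_mul_of_nonneg_left (inv_anti₀ htzpos htz2) hkpos.le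
  have hsum2P : P₁ + ‖x₀‖ ≤ 2*P₁ := by linarith only [hx₀P₁]
  have hq_low2 : k * (2*P₁)⁻¹ ≤ k * (P₁ + ‖x₀‖)⁻¹ := by
    apply mul_le_mul_of_nonneg_left _ hkpos.le
    exact inv_anti₀ (by linarith only [hP₁pos, norm_nonneg x₀]) hsum2P
  have hP₁sq : (0:ℝ) < P₁^2 := pow_pos hP₁pos 2
  have h4P₁ : (0:ℝ) < 4*P₁ := by linarith only [hP₁pos]
  have hexcess : bb*C/P₁^2 ≤ k/(4*P₁) := by
    have h1 : 4*bb*C/k ≤ P₁ - 1 := by linarith only [hP₁C]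
    rw [div_le_iff₀ hkpos] at h1
    have hkP : 4*bb*C ≤ k*P₁ := by nlinarith only [h1, hkpos]
    rw [div_le_div_iff₀ hP₁sq h4P₁]
    have h2 := mul_le_mul_of_nonneg_right hkP hP₁pos.le
    nlinarith only [h2]
  have hΦz_low : 1 + k/(4*P₁) ≤ Real.exp (bb * U z₁) + k * phi0 r (‖z₁ - x₀‖^2) := by
    have h1 := hlower z₁ (by rw [hz₁]; exact hP₁R)
    rw [hz₁] at h1
    have h2 : k/(2*P₁) ≤ k * (P₁ + ‖x₀‖)⁻¹ := by
      rw [div_eq_mul_inv]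
      exact hq_low2
    have h3 : k/(4*P₁) + k/(4*P₁) = k/(2*P₁) := by
      field_simp
      ring
    linarith only [h1, h2, h3, hexcess, hq_low]
  -- choice of the outer sphere radius P₂
  have hAA : (0:ℝ) < k/(4*P₁) := div_pos hkpos h4P₁
  set AA : ℝ := k/(4*P₁) with hAAdef
  set P₂ : ℝ := max P₁ (max (2*T+1) (max (2*‖x₀‖ + r + 1) ((2*T+2*k)/AA + 1))) with hP₂def
  have hP₂P₁ : P₁ ≤ P₂ := le_max_left _ _
  have hP₂T : 2*T+1 ≤ P₂ := le_trans (le_max_left _ _) (le_max_right _ _)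
  have hP₂x₀ : 2*‖x₀‖ + r + 1 ≤ P₂ :=
    le_trans (le_trans (le_max_left _ _) (le_max_right _ _)) (le_max_right _ _)
  have hP₂A : (2*T+2*k)/AA + 1 ≤ P₂ :=
    le_trans (le_trans (le_max_right _ _) (le_max_right _ _)) (le_max_right _ _)
  have hP₂pos : 0 < P₂ := lt_of_lt_of_le hP₁pos hP₂P₁
  have hP₂half : P₂/2 ≤ P₂ - ‖x₀‖ := by linarith only [hP₂x₀, norm_nonneg x₀, hr]
  -- upper bound for Φ on the outer sphere
  have houter : ∀ w : E3, ‖w‖ = P₂ →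
      Real.exp (bb * U w) + k * phi0 r (‖w - x₀‖^2) ≤ 1 + (2*T+2*k)/P₂ := by
    intro w hw
    have hwR : R ≤ ‖w‖ := by rw [hw]; linarith only [hP₁R, hP₂P₁]
    have hw1 : 1 ≤ ‖w‖ := by rw [hw]; linarith only [hP₁1, hP₂P₁]
    have hwT : 2*T + 1 ≤ ‖w‖ := by rw [hw]; exact hP₂T
    have h1 := hupper w hwR hw1 hwT
    rw [hw] at h1
    have hnn := norm_sub_norm_le w x₀
    rw [hw] at hnn
    have htw : r ≤ ‖w - x₀‖ := by linarith only [hnn, hP₂x₀, norm_nonneg x₀]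
    have htw2 : P₂ - ‖x₀‖ ≤ ‖w - x₀‖ := by linarith only [hnn]
    have h2 : k * phi0 r (‖w - x₀‖^2) ≤ k * (P₂ - ‖x₀‖)⁻¹ := by
      rw [phi0_tail hr htw]
      exact mul_le_mul_of_nonneg_left
        (inv_anti₀ (by linarith only [hP₂x₀, hr, norm_nonneg x₀]) htw2) hkpos.le
    have h3 : (P₂ - ‖x₀‖)⁻¹ ≤ 2/P₂ := by
      have h := inv_anti₀ (by linarith only [hP₂pos] : (0:ℝ) < P₂/2) hP₂half
      rwa [inv_div] at h
    have h4 : k * (P₂ - ‖x₀‖)⁻¹ ≤ k * (2/P₂) := mul_le_mul_of_nonneg_left h3 hkpos.le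
    have h5 : 2*T/P₂ + k * (2/P₂) = (2*T+2*k)/P₂ := by
      field_simp
    linarith only [h1, h2, h4, h5]
  -- maximum principle step for each δ > 0
  have hδstep : ∀ δ : ℝ, 0 < δ →
      Real.exp (bb * U z₁) + k * phi0 r (‖z₁ - x₀‖^2) ≤ 1 + (2*T+2*k)/P₂ + δ*P₂^2 := by
    intro δ hδ
    obtain ⟨w, hwnorm, hwle⟩ := max_principle (hFd δ) (hFpd δ) (hFlap δ hδ) hP₂pos
      (y := z₁) (by rw [hz₁]; exact hP₂P₁)
    have h1 := houter w hwnorm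
    have h2 : Real.exp (bb * U z₁) + (k * phi0 r (‖z₁ - x₀‖^2) + δ*‖z₁‖^2)
        ≤ Real.exp (bb * U w) + (k * phi0 r (‖w - x₀‖^2) + δ*‖w‖^2) := hwle
    rw [hwnorm] at h2
    have h3 : 0 ≤ δ*‖z₁‖^2 := mul_nonneg hδ.le (by positivity)
    linarith only [h1, h2, h3]
  -- pass to the limit δ → 0
  have hΦz_up : Real.exp (bb * U z₁) + k * phi0 r (‖z₁ - x₀‖^2) ≤ 1 + (2*T+2*k)/P₂ := by
    by_contra hcon
    push_neg at hcon
    set d : ℝ := Real.exp (bb * U z₁) + k * phi0 r (‖z₁ - x₀‖^2) - (1 + (2*T+2*k)/P₂) with hd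
    have hdpos : 0 < d := by rw [hd]; linarith only [hcon]
    have hp2 : (0:ℝ) < 2*P₂^2 := by nlinarith only [hP₂pos]
    have hδ0 : 0 < d/(2*P₂^2) := div_pos hdpos hp2
    have hs := hδstep (d/(2*P₂^2)) hδ0
    have heq : d/(2*P₂^2)*P₂^2 = d/2 := by
      field_simp
    rw [heq] at hs
    linarith only [hs, hcon, hd]
  -- final contradiction
  have hfin : (2*T+2*k)/P₂ < AA := by
    have h1 : (2*T+2*k)/AA ≤ P₂ - 1 := by linarith only [hP₂A]
    rw [div_le_iff₀ hAA] at h1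
    rw [div_lt_iff₀ hP₂pos]
    nlinarith only [h1, hAA]
  rw [hAAdef] at hfin
  linarith only [hΦz_low, hΦz_up, hfin]

end
end
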